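/- Let n ≥ 4 and let x_1, …, x_n be positive real numbers. Denote by e_j the j-th elementary symmetric polynomial of x_1,…,x_n, with e_0 = 1. Then e_{n−1}·e_{n−4} < e_{n−2}·e_{n−3}. -/

import Mathlib

open Finset

/-- The `j`-th elementary symmetric polynomial of `x₁, …, xₙ`
(with `e₀ = 1`). -/
def esymm {n : ℕ} (x : Fin n → ℝ) (j : ℕ) : ℝ :=
  ∑ s ∈ Finset.powersetCard j (Finset.univ : Finset (Fin n)), ∏ i ∈ s, x i

namespace Stmt17Aux

open Multiset

lemma esymm_cons (a : ℝ) (s : Multiset ℝ) (k : ℕ) :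
    (a ::ₘ s).esymm (k + 1) = s.esymm (k + 1) + a * s.esymm k := by
  simp only [Multiset.esymm, powersetCard_cons, Multiset.map_add, Multiset.sum_add,
    Multiset.map_map, Function.comp_def, Multiset.prod_cons]
  rw [Multiset.sum_map_mul_left]

lemma esymm_zero' (s : Multiset ℝ) : s.esymm 0 = 1 := by
  simp [Multiset.esymm]

lemma esymm_of_card_lt {s : Multiset ℝ} {k : ℕ} (h : Multiset.card s < k) :
    s.esymm k = 0 := by
  simp [Multiset.esymm, Multiset.powersetCard_eq_empty _ h]

lemma esymm_nonneg {s : Multiset ℝ} (hs : ∀ y ∈ s, 0 ≤ y) (k : ℕ) :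
    0 ≤ s.esymm k := by
  refine Multiset.sum_nonneg ?_
  intro z hz
  rw [Multiset.mem_map] at hz
  obtain ⟨t, ht, rfl⟩ := hz
  rw [Multiset.mem_powersetCard] at ht
  exact Multiset.prod_nonneg fun y hy => hs y (Multiset.mem_of_le ht.1 hy)

lemma esymm_pos {s : Multiset ℝ} (hs : ∀ y ∈ s, 0 < y) {k : ℕ}
    (hk : k ≤ Multiset.card s) : 0 < s.esymm k := by
  induction s using Multiset.induction generalizing k with
  | empty =>
    obtain rfl : k = 0 := Nat.le_zero.mp hk
    simp [esymm_zero']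
  | cons a t ih =>
    rcases k with _ | k
    · simp [esymm_zero']
    · rw [esymm_cons]
      have ha : 0 < a := hs a (Multiset.mem_cons_self a t)
      have ht : ∀ y ∈ t, 0 < y := fun y hy => hs y (Multiset.mem_cons_of_mem hy)
      have hk' : k ≤ Multiset.card t := by
        simpa using Nat.lt_succ_iff.mp (lt_of_lt_of_le (Nat.lt_succ_self k)
          (by simpa using hk))
      have h1 : 0 < a * t.esymm k := mul_pos ha (ih ht hk')
      have h2 : 0 ≤ t.esymm (k + 1) := esymm_nonneg (fun y hy => (ht y hy).le) _
      linarith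

lemma h2 {s : Multiset ℝ} (hs : ∀ y ∈ s, 0 ≤ y) :
    s.esymm 3 ≤ s.esymm 1 * s.esymm 2 := by
  induction s using Multiset.induction with
  | empty => simp [esymm_of_card_lt (s := (0 : Multiset ℝ)) (k := 3) (by simp),
      esymm_of_card_lt (s := (0 : Multiset ℝ)) (k := 2) (by simp)]
  | cons a t ih =>
    have ha : 0 ≤ a := hs a (Multiset.mem_cons_self a t)
    have ht : ∀ y ∈ t, 0 ≤ y := fun y hy => hs y (Multiset.mem_cons_of_mem hy)
    have e1 : 0 ≤ t.esymm 1 := esymm_nonneg ht 1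
    have e2 : 0 ≤ t.esymm 2 := esymm_nonneg ht 2
    have key := ih ht
    show (a ::ₘ t).esymm (2 + 1) ≤ (a ::ₘ t).esymm (0 + 1) * (a ::ₘ t).esymm (1 + 1)
    rw [esymm_cons, esymm_cons, esymm_cons, esymm_zero']
    norm_num
    nlinarith [mul_nonneg ha (mul_nonneg e1 e1), mul_nonneg (mul_nonneg ha ha) e1]

lemma h1 {s : Multiset ℝ} (hs : ∀ y ∈ s, 0 ≤ y) :
    s.esymm 4 ≤ s.esymm 2 * s.esymm 2 := by
  induction s using Multiset.induction with
  | empty => simp [esymm_of_card_lt (s := (0 : Multiset ℝ)) (k := 4) (by simp),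
      esymm_of_card_lt (s := (0 : Multiset ℝ)) (k := 2) (by simp)]
  | cons a t ih =>
    have ha : 0 ≤ a := hs a (Multiset.mem_cons_self a t)
    have ht : ∀ y ∈ t, 0 ≤ y := fun y hy => hs y (Multiset.mem_cons_of_mem hy)
    have e1 : 0 ≤ t.esymm 1 := esymm_nonneg ht 1
    have e2 : 0 ≤ t.esymm 2 := esymm_nonneg ht 2
    have e3 : 0 ≤ t.esymm 3 := esymm_nonneg ht 3
    have key := ih ht
    have k2 := h2 ht
    show (a ::ₘ t).esymm (3 + 1) ≤ (a ::ₘ t).esymm (1 + 1) * (a ::ₘ t).esymm (1 + 1)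
    rw [esymm_cons, esymm_cons]
    norm_num
    nlinarith [mul_le_mul_of_nonneg_left k2 ha, mul_nonneg ha (mul_nonneg e1 e2),
      mul_nonneg (mul_nonneg ha ha) (mul_nonneg e1 e1)]

lemma h3 {s : Multiset ℝ} (hs : ∀ y ∈ s, 0 ≤ y) :
    s.esymm 1 * s.esymm 4 ≤ s.esymm 2 * s.esymm 3 := by
  induction s using Multiset.induction with
  | empty => simp [esymm_of_card_lt (s := (0 : Multiset ℝ)) (k := 4) (by simp),
      esymm_of_card_lt (s := (0 : Multiset ℝ)) (k := 3) (by simp)]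
  | cons a t ih =>
    have ha : 0 ≤ a := hs a (Multiset.mem_cons_self a t)
    have ht : ∀ y ∈ t, 0 ≤ y := fun y hy => hs y (Multiset.mem_cons_of_mem hy)
    have e1 : 0 ≤ t.esymm 1 := esymm_nonneg ht 1
    have e2 : 0 ≤ t.esymm 2 := esymm_nonneg ht 2
    have e3 : 0 ≤ t.esymm 3 := esymm_nonneg ht 3
    have e4 : 0 ≤ t.esymm 4 := esymm_nonneg ht 4
    have key := ih ht
    have k1 := h1 ht
    have k2 := h2 ht
    show (a ::ₘ t).esymm (0 + 1) * (a ::ₘ t).esymm (3 + 1)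
        ≤ (a ::ₘ t).esymm (1 + 1) * (a ::ₘ t).esymm (2 + 1)
    rw [esymm_cons, esymm_cons, esymm_cons, esymm_cons, esymm_zero']
    norm_num
    nlinarith [mul_nonneg ha ha, sq_nonneg a]

lemma main_mult {s : Multiset ℝ} (hs : ∀ y ∈ s, 0 < y) (hcard : 3 ≤ Multiset.card s) :
    s.esymm 1 * s.esymm 4 < s.esymm 2 * s.esymm 3 := by
  induction s using Multiset.induction with
  | empty => simp at hcard
  | cons a t ih =>
    have ha : 0 < a := hs a (Multiset.mem_cons_self a t)
    have ht : ∀ y ∈ t, 0 < y := fun y hy => hs y (Multiset.mem_cons_of_mem hy)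
    have ht' : ∀ y ∈ t, (0:ℝ) ≤ y := fun y hy => (ht y hy).le
    have e1 : 0 ≤ t.esymm 1 := esymm_nonneg ht' 1
    have e2 : 0 ≤ t.esymm 2 := esymm_nonneg ht' 2
    have e3 : 0 ≤ t.esymm 3 := esymm_nonneg ht' 3
    have e4 : 0 ≤ t.esymm 4 := esymm_nonneg ht' 4
    have k1 := h1 ht'
    have k2 := h2 ht'
    have k3 := h3 ht'
    have hct : 2 ≤ Multiset.card t := by
      have := hcard; rw [Multiset.card_cons] at this; omega
    show (a ::ₘ t).esymm (0 + 1) * (a ::ₘ t).esymm (3 + 1)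
        < (a ::ₘ t).esymm (1 + 1) * (a ::ₘ t).esymm (2 + 1)
    rw [esymm_cons, esymm_cons, esymm_cons, esymm_cons, esymm_zero']
    norm_num
    rcases Nat.lt_or_ge (Multiset.card t) 3 with hc | hc
    · -- card t = 2 : e3 t = e4 t = 0, e1 e2 > 0
      have z3 : t.esymm 3 = 0 := esymm_of_card_lt hc
      have z4 : t.esymm 4 = 0 := esymm_of_card_lt (by omega)
      have p1 : 0 < t.esymm 1 := esymm_pos ht (by omega)
      have p2 : 0 < t.esymm 2 := esymm_pos ht (by omega)
      nlinarith [mul_pos p1 p2, mul_pos (mul_pos ha ha) (mul_pos p1 p2)]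
    · have key := ih ht hc
      nlinarith [mul_pos ha ha, sq_nonneg a]

end Stmt17Aux

lemma stmt17_esymm_eq (n : ℕ) (x : Fin n → ℝ) (j : ℕ) :
    esymm x j = (Multiset.map x Finset.univ.val).esymm j := by
  rw [Finset.esymm_map_val]
  rfl

lemma stmt17_inv (n : ℕ) (x : Fin n → ℝ) (hx : ∀ i, 0 < x i) {k : ℕ} (hk : k ≤ n) :
    esymm x (n - k) = (∏ i, x i) * esymm (fun i => (x i)⁻¹) k := by
  unfold esymm
  rw [Finset.mul_sum]
  refine Finset.sum_nbij' (fun s => sᶜ) (fun s => sᶜ) ?_ ?_ ?_ ?_ ?_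
  · intro s hs
    rw [Finset.mem_powersetCard_univ] at hs ⊢
    rw [Finset.card_compl, hs]
    simp only [Fintype.card_fin]
    omega
  · intro s hs
    rw [Finset.mem_powersetCard_univ] at hs ⊢
    rw [Finset.card_compl, hs]
    simp only [Fintype.card_fin]
  · intro s _; exact compl_compl s
  · intro s _; exact compl_compl s
  · intro s hs
    have hsplit := Finset.prod_mul_prod_compl s x
    have hpos : (0:ℝ) < ∏ i ∈ sᶜ, x i :=
      Finset.prod_pos fun i _ => hx i
    have : ∏ i ∈ sᶜ, (fun i => (x i)⁻¹) i = (∏ i ∈ sᶜ, x i)⁻¹ := by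
      simp [Finset.prod_inv_distrib]
    rw [this]
    field_simp
    exact hsplit

/-- The key inequality in the proof of Theorem 1 (1): for `n ≥ 4` and positive
reals `x₁, …, xₙ`, one has `e_{n−1} e_{n−4} < e_{n−2} e_{n−3}`. -/
theorem stmt17 (n : ℕ) (hn : 4 ≤ n) (x : Fin n → ℝ) (hx : ∀ i, 0 < x i) :
    esymm x (n - 1) * esymm x (n - 4) < esymm x (n - 2) * esymm x (n - 3) := by
  set y : Fin n → ℝ := fun i => (x i)⁻¹ with hy
  have hyy : ∀ i, 0 < y i := fun i => inv_pos.mpr (hx i)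
  have hP : (0:ℝ) < ∏ i, x i := Finset.prod_pos fun i _ => hx i
  rw [stmt17_inv n x hx (by omega : 1 ≤ n), stmt17_inv n x hx (by omega : 2 ≤ n),
    stmt17_inv n x hx (by omega : 3 ≤ n), stmt17_inv n x hx (by omega : 4 ≤ n)]
  have hm : ∀ y' ∈ Multiset.map y Finset.univ.val, (0:ℝ) < y' := by
    intro z hz
    rw [Multiset.mem_map] at hz
    obtain ⟨i, _, rfl⟩ := hz
    exact hyy i
  have hcard : 3 ≤ Multiset.card (Multiset.map y Finset.univ.val) := by
    simp only [Multiset.card_map, Finset.card_val, Finset.card_univ, Fintype.card_fin]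
    omega
  have key := Stmt17Aux.main_mult hm hcard
  rw [stmt17_esymm_eq n y 1, stmt17_esymm_eq n y 2, stmt17_esymm_eq n y 3,
    stmt17_esymm_eq n y 4]
  set E1 := (Multiset.map y Finset.univ.val).esymm 1
  set E2 := (Multiset.map y Finset.univ.val).esymm 2
  set E3 := (Multiset.map y Finset.univ.val).esymm 3
  set E4 := (Multiset.map y Finset.univ.val).esymm 4
  nlinarith [mul_pos hP hP]
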